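/- (Structure of the image of the CRT map) Let F be a field, let s, n be natural numbers with s+1 ≤ n < 2s+2, and let y1, y2 ∈ F with y1 ≠ y2. Then for all polynomials r1, r2 ∈ F[X] of degree ≤ s, the following are equivalent: (i) there exists f ∈ F[X] with deg f < n, f %ₘ g_{y1} = r1, and f %ₘ g_{y2} = r2; (ii) there exists h ∈ F[X] with deg h < n − (s+1) (in particular h = 0 is allowed) such that r2 − r1 = (h·g_{y1}) %ₘ g_{y2}. -/

import Mathlib

open Polynomial

/-- Structure of the image of the CRT map: for `r1, r2` of degree `≤ s`, the pair
`(r1, r2)` lies in the image of `P_{<n}` under `f ↦ (f %ₘ g_{y1}, f %ₘ g_{y2})` iff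
`r2 - r1 = (h · g_{y1}) %ₘ g_{y2}` for some `h` of degree `< n - (s + 1)`. -/
theorem stmt_13 {F : Type*} [Field F] (s n : ℕ) (hsn : s + 1 ≤ n) (hn : n < 2 * s + 2)
    (y1 y2 : F) (hy : y1 ≠ y2) (r1 r2 : F[X])
    (hr1 : r1.degree ≤ s) (hr2 : r2.degree ≤ s) :
    (∃ f : F[X], f.degree < n ∧
        f %ₘ ((X - C y1) ^ (s + 1)) = r1 ∧ f %ₘ ((X - C y2) ^ (s + 1)) = r2) ↔
    (∃ h : F[X], h.degree < (n - (s + 1) : ℕ) ∧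
        r2 - r1 = (h * (X - C y1) ^ (s + 1)) %ₘ ((X - C y2) ^ (s + 1))) := by
  have hm1 : ((X - C y1) ^ (s + 1)).Monic := (monic_X_sub_C y1).pow _
  have hm2 : ((X - C y2) ^ (s + 1)).Monic := (monic_X_sub_C y2).pow _
  have hdeg2 : ((X - C y2) ^ (s + 1)).degree = ((s + 1 : ℕ) : WithBot ℕ) := by
    rw [degree_pow, degree_X_sub_C]; simp
  have hdeg1 : ((X - C y1) ^ (s + 1)).degree = ((s + 1 : ℕ) : WithBot ℕ) := by
    rw [degree_pow, degree_X_sub_C]; simp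
  have hr1lt : r1.degree < ((X - C y2) ^ (s + 1)).degree := by
    rw [hdeg2]
    exact lt_of_le_of_lt hr1 (by exact_mod_cast Nat.lt_succ_self s)
  have hr1mod : r1 %ₘ ((X - C y2) ^ (s + 1)) = r1 :=
    (modByMonic_eq_self_iff hm2).mpr hr1lt
  constructor
  · rintro ⟨f, hf, hf1, hf2⟩
    set q := f /ₘ ((X - C y1) ^ (s + 1)) with hq
    have heq : f = q * (X - C y1) ^ (s + 1) + r1 := by
      have h := modByMonic_add_div f ((X - C y1) ^ (s + 1))
      rw [hf1] at h
      rw [← h]; ring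
    refine ⟨q, ?_, ?_⟩
    · rcases eq_or_ne q 0 with h0 | h0
      · rw [h0, degree_zero]
        exact WithBot.bot_lt_coe _
      · have heq2 : q * (X - C y1) ^ (s + 1) = f - r1 := by rw [heq]; ring
        have hlt : (f - r1).degree < (n : WithBot ℕ) := by
          apply lt_of_le_of_lt (degree_sub_le _ _)
          apply max_lt hf
          exact lt_of_le_of_lt hr1 (by exact_mod_cast Nat.lt_of_lt_of_le (Nat.lt_succ_self s) hsn)
        rw [← heq2, degree_mul, hdeg1, degree_eq_natDegree h0] at hlt
        rw [degree_eq_natDegree h0]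
        have h2 : (q.natDegree + (s + 1) : ℕ) < n := by exact_mod_cast hlt
        exact_mod_cast Nat.lt_sub_of_add_lt h2
    · rw [← hf2]
      conv_lhs => rw [heq]
      rw [add_modByMonic, hr1mod]
      ring
  · rintro ⟨h, hh, hhe⟩
    refine ⟨h * (X - C y1) ^ (s + 1) + r1, ?_, ?_, ?_⟩
    · apply lt_of_le_of_lt (degree_add_le _ _)
      apply max_lt
      · rcases eq_or_ne h 0 with h0 | h0
        · simp only [h0, zero_mul, degree_zero]
          exact WithBot.bot_lt_coe _
        · rw [degree_mul, hdeg1, degree_eq_natDegree h0]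
          rw [degree_eq_natDegree h0] at hh
          have h1 : h.natDegree < n - (s + 1) := by exact_mod_cast hh
          have h2 : h.natDegree + (s + 1) < n := by omega
          exact_mod_cast h2
      · exact lt_of_le_of_lt hr1 (by exact_mod_cast Nat.lt_of_lt_of_le (Nat.lt_succ_self s) hsn)
    · rw [add_modByMonic]
      have hz : h * (X - C y1) ^ (s + 1) %ₘ (X - C y1) ^ (s + 1) = 0 := by
        rw [modByMonic_eq_zero_iff_dvd hm1]
        exact Dvd.intro_left h rfl
      rw [hz, (modByMonic_eq_self_iff hm1).mpr (by rw [hdeg1]; exact lt_of_le_of_lt hr1 (by exact_mod_cast Nat.lt_succ_self s))]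
      simp
    · rw [add_modByMonic, hr1mod, ← hhe]
      ring
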